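/- If miner i deviates from the Nash equilibrium to x_i* + Δ with Δ > 0, then the utility loss incurred to any other miner j ≠ i equals Δ·(c* − c_j)/(1 + c*·Δ), which is strictly positive. -/

import Mathlib

open Finset

/-- Payoff of miner `i` in the mining game with costs `c` and allocations `x`. -/
noncomputable def payoff {n : ℕ} (c x : Fin n → ℝ) (i : Fin n) : ℝ :=
  x i / (∑ j, x j) - c i * x i

/-- the utility loss incurred to any other miner `j ≠ i` by miner `i`'s
deviation from Nash equilibrium to `x_i* + Δ` equals `Δ(c* − c_j)/(1 + c*Δ) > 0`. -/
theorem other_miner_loss (n : ℕ) (hn : 2 ≤ n) (c : Fin n → ℝ)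
    (hc : ∀ i, 0 < c i)
    (cstar : ℝ) (hcstar : cstar = (∑ k, c k) / ((n : ℝ) - 1))
    (hpart : ∀ j, c j < cstar)
    (xstar : Fin n → ℝ) (hx : ∀ i, xstar i = (1 - c i / cstar) / cstar)
    (i j : Fin n) (hij : j ≠ i) (Δ : ℝ) (hΔ : 0 < Δ) :
    payoff c xstar j - payoff c (Function.update xstar i (xstar i + Δ)) j
      = Δ * (cstar - c j) / (1 + cstar * Δ) ∧
    0 < payoff c xstar j - payoff c (Function.update xstar i (xstar i + Δ)) j := by
  have hcs : 0 < cstar := (hc i).trans (hpart i)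
  have hn1 : (2:ℝ) ≤ (n:ℝ) := by exact_mod_cast hn
  have hn1' : (n:ℝ) - 1 ≠ 0 := by linarith
  have hsumc : ∑ k, c k = cstar * ((n : ℝ) - 1) := by
    rw [hcstar]; field_simp
  have hsum : ∑ k, xstar k = 1 / cstar := by
    have : ∑ k, xstar k = ∑ k : Fin n, (1 - c k / cstar) / cstar := by
      exact Finset.sum_congr rfl fun k _ => hx k
    rw [this, ← Finset.sum_div]
    rw [Finset.sum_sub_distrib, Finset.sum_const, ← Finset.sum_div, hsumc]
    simp only [Finset.card_univ, Fintype.card_fin, nsmul_eq_mul, mul_one]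
    field_simp
    ring
  have hsum2 : ∑ k, Function.update xstar i (xstar i + Δ) k = 1 / cstar + Δ := by
    rw [Finset.sum_update_of_mem (Finset.mem_univ i)]
    have := Finset.add_sum_erase Finset.univ xstar (Finset.mem_univ i)
    rw [show Finset.univ \ {i} = Finset.univ.erase i by
      ext; simp [Finset.mem_erase, and_comm]]
    rw [← hsum, ← this]; ring
  have hxj : xstar j = (1 - c j / cstar) / cstar := hx j
  have hupj : Function.update xstar i (xstar i + Δ) j = xstar j :=
    Function.update_of_ne hij _ _
  have hden : 0 < 1 + cstar * Δ := by positivity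
  have hden2 : 0 < 1 / cstar + Δ := by positivity
  have key : payoff c xstar j - payoff c (Function.update xstar i (xstar i + Δ)) j
      = Δ * (cstar - c j) / (1 + cstar * Δ) := by
    unfold payoff
    rw [hsum, hsum2, hupj, hxj]
    field_simp
    ring
  refine ⟨key, ?_⟩
  rw [key]
  exact div_pos (mul_pos hΔ (sub_pos.mpr (hpart j))) hden
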